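/- Let φ be an injective endomorphism of a residually finite group G. If the ascending HNN extension HNN_φ(G) is residually finite, then φ is extendable: there exists a profinite group Ḡ containing G as a dense subgroup and a continuous automorphism φ̄ of Ḡ whose restriction to G is φ. -/

import Mathlib

/-- The relations of the ascending HNN extension (mapping torus) of an endomorphism `φ`
of a group `G`: the multiplication table of `G` together with `t g t⁻¹ = φ g`. -/
def hnnRel {G : Type} [Group G] (φ : G →* G) : Set (FreeGroup (G ⊕ Unit)) :=
  { r | (∃ g h : G, r = FreeGroup.of (Sum.inl g) * FreeGroup.of (Sum.inl h) *
            (FreeGroup.of (Sum.inl (g * h)))⁻¹) ∨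
        (∃ g : G, r = FreeGroup.of (Sum.inr ()) * FreeGroup.of (Sum.inl g) *
            (FreeGroup.of (Sum.inr ()))⁻¹ * (FreeGroup.of (Sum.inl (φ g)))⁻¹) }

/-- The ascending HNN extension `HNN_φ(G)`. -/
def HNNExt {G : Type} [Group G] (φ : G →* G) : Type := PresentedGroup (hnnRel φ)

instance {G : Type} [Group G] (φ : G →* G) : Group (HNNExt φ) := by
  unfold HNNExt; infer_instance

/-- The image of `g ∈ G` in the HNN extension. -/
def hnnBase {G : Type} [Group G] (φ : G →* G) (g : G) : HNNExt φ :=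
  PresentedGroup.of (Sum.inl g)

/-- The stable letter `t` of the HNN extension. -/
def hnnT {G : Type} [Group G] (φ : G →* G) : HNNExt φ :=
  PresentedGroup.of (Sum.inr ())

def ResiduallyFinite (T : Type) [Group T] : Prop :=
  ∀ x : T, x ≠ 1 → ∃ (H : Type) (_ : Group H) (_ : Finite H) (ψ : T →* H), ψ x ≠ 1

section Aux

variable {G : Type} [Group G] (φ : G →* G)

lemma hnnRel_one {r : FreeGroup (G ⊕ Unit)} (hr : r ∈ hnnRel φ) :
    PresentedGroup.mk (hnnRel φ) r = 1 := by
  rw [PresentedGroup.mk_eq_one_iff]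
  exact Subgroup.subset_normalClosure hr

lemma hnnBase_mul (g h : G) : hnnBase φ g * hnnBase φ h = hnnBase φ (g * h) := by
  have := hnnRel_one φ (Or.inl ⟨g, h, rfl⟩)
  simp only [map_mul, map_inv] at this
  rw [mul_inv_eq_one] at this
  exact this

lemma hnn_conj (g : G) : hnnT φ * hnnBase φ g * (hnnT φ)⁻¹ = hnnBase φ (φ g) := by
  have := hnnRel_one φ (Or.inr ⟨g, rfl⟩)
  simp only [map_mul, map_inv] at this
  rw [mul_inv_eq_one] at this
  exact this

/-- `G → HNNExt φ` as a monoid hom. -/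
def hnnBaseHom : G →* HNNExt φ := MonoidHom.mk' (hnnBase φ) (fun g h => (hnnBase_mul φ g h).symm)

@[simp] lemma hnnBaseHom_apply (g : G) : hnnBaseHom φ g = hnnBase φ g := rfl

/-- Comparison map to Mathlib's `HNNExtension`. -/
noncomputable def hnnCompare (hφ : Function.Injective φ) :
    HNNExt φ →* HNNExtension G ⊤ φ.range
      (Subgroup.topEquiv.trans (MonoidHom.ofInjective hφ)) :=
  PresentedGroup.toGroup (f := Sum.elim HNNExtension.of (fun _ => HNNExtension.t)) (by
    rintro r (⟨g, h, rfl⟩ | ⟨g, rfl⟩)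
    · simp only [map_mul, map_inv, FreeGroup.lift_apply_of, Sum.elim_inl, mul_inv_eq_one,
        mul_inv_rev]
      group
    · simp only [map_mul, map_inv, FreeGroup.lift_apply_of, Sum.elim_inl, Sum.elim_inr,
        mul_inv_eq_one]
      have := HNNExtension.equiv_eq_conj
        (φ := Subgroup.topEquiv.trans (MonoidHom.ofInjective hφ)) ⟨g, trivial⟩
      simp only [MulEquiv.trans_apply, Subgroup.topEquiv_apply] at this
      rw [← this]
      congr 1)

lemma hnnBase_injective (hφ : Function.Injective φ) : Function.Injective (hnnBase φ) := by
  have h : ∀ g, hnnCompare φ hφ (hnnBase φ g) = HNNExtension.of g := by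
    intro g
    exact PresentedGroup.toGroup.of _
  intro g g' hgg'
  apply HNNExtension.of_injective
  rw [← h g, ← h g', hgg']

end Aux

section Profinite

variable {G : Type} [Group G] (φ : G →* G)

/-- Index type: finite-index normal subgroups of the HNN extension. -/
def FQ : Type := {N : Subgroup (HNNExt φ) // N.Normal ∧ N.FiniteIndex}

instance (N : FQ φ) : (N.1).Normal := N.2.1

instance (N : FQ φ) : (N.1).FiniteIndex := N.2.2

instance (N : FQ φ) : Finite (HNNExt φ ⧸ N.1) := Subgroup.finite_quotient_of_finiteIndex

instance (N : FQ φ) : TopologicalSpace (HNNExt φ ⧸ N.1) := ⊥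

instance (N : FQ φ) : DiscreteTopology (HNNExt φ ⧸ N.1) := ⟨rfl⟩

instance (N : FQ φ) : IsTopologicalGroup (HNNExt φ ⧸ N.1) := {}

/-- The ambient profinite group: product of all finite quotients of the HNN extension. -/
def Cpf : Type := ∀ N : FQ φ, HNNExt φ ⧸ N.1

instance : Group (Cpf φ) := by unfold Cpf; infer_instance
instance : TopologicalSpace (Cpf φ) := by unfold Cpf; infer_instance
instance : IsTopologicalGroup (Cpf φ) := by unfold Cpf; infer_instance
instance : CompactSpace (Cpf φ) := by unfold Cpf; infer_instance
instance : T2Space (Cpf φ) := by unfold Cpf; infer_instance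
instance : TotallyDisconnectedSpace (Cpf φ) := by unfold Cpf; infer_instance

/-- The map to the product of all finite quotients. -/
def jmap : HNNExt φ →* Cpf φ := Pi.monoidHom (fun N => QuotientGroup.mk' N.1)

lemma jmap_apply (x : HNNExt φ) (N : FQ φ) : jmap φ x N = QuotientGroup.mk' N.1 x := rfl

lemma jmap_ne_one (hrf : ResiduallyFinite (HNNExt φ)) {x : HNNExt φ} (hx : x ≠ 1) :
    jmap φ x ≠ 1 := by
  obtain ⟨H, _, _, ψ, hψ⟩ := hrf x hx
  have hker : (ψ.ker).FiniteIndex := by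
    haveI : Finite ψ.range := Subtype.finite
    infer_instance
  intro h
  apply hψ
  have hx' : jmap φ x ⟨ψ.ker, MonoidHom.normal_ker ψ, hker⟩ = 1 := by rw [h]; rfl
  change QuotientGroup.mk' _ x = 1 at hx'
  rw [QuotientGroup.mk'_apply, QuotientGroup.eq_one_iff] at hx'
  exact hx'

/-- Key finite-quotient lemma: in each finite quotient, the image of `G` coincides with
the image of `φ(G)`. -/
lemma exists_phi_eq (M : FQ φ) (g : G) :
    ∃ h : G, QuotientGroup.mk' M.1 (hnnBase φ g) = QuotientGroup.mk' M.1 (hnnBase φ (φ h)) := by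
  classical
  set π := QuotientGroup.mk' M.1 with hπ
  set A : Subgroup (HNNExt φ ⧸ M.1) := (π.comp (hnnBaseHom φ)).range with hA
  set B : Subgroup (HNNExt φ ⧸ M.1) := (π.comp ((hnnBaseHom φ).comp φ)).range with hB
  have hBA : B ≤ A := by
    rintro _ ⟨g, rfl⟩
    exact ⟨φ g, rfl⟩
  have hconj : ∀ x : HNNExt φ ⧸ M.1,
      MulAut.conj (π (hnnT φ)) x = π (hnnT φ) * x * (π (hnnT φ))⁻¹ := fun _ => rfl
  have hmap : Subgroup.map (MulAut.conj (π (hnnT φ))).toMonoidHom A = B := by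
    rw [hA, hB, ← MonoidHom.range_comp]
    congr 1
    ext g
    simp only [MonoidHom.comp_apply, MulEquiv.coe_toMonoidHom, hconj, hnnBaseHom_apply]
    rw [← map_inv, ← map_mul, ← map_mul, hnn_conj]
  have hcard : Nat.card A = Nat.card B := by
    rw [← hmap]
    exact Nat.card_congr
      ((MulEquiv.subgroupMap (MulAut.conj (π (hnnT φ))) A).toEquiv)
  have hAB : B = A := Subgroup.eq_of_le_of_card_ge hBA (le_of_eq hcard)
  have : π (hnnBase φ g) ∈ A := ⟨g, rfl⟩
  rw [← hAB] at this
  obtain ⟨h, hh⟩ := this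
  exact ⟨h, hh.symm⟩

/-- Density: the image of `φ(G)` is dense in the closure of the image of `G`. -/
lemma mem_closure_phi (g : G) :
    jmap φ (hnnBase φ g) ∈
      closure (Set.range (fun h : G => jmap φ (hnnBase φ (φ h)))) := by
  classical
  rw [mem_closure_iff]
  intro o ho hgo
  obtain ⟨I, u, hu, hsub⟩ := isOpen_pi_iff.mp ho _ hgo
  -- intersection of finitely many finite-index normal subgroups
  let Msub : Subgroup (HNNExt φ) := ⨅ (N : I), (N : FQ φ).1
  have hMnormal : Msub.Normal := by
    constructor
    intro n hn t
    rw [Subgroup.mem_iInf] at hn ⊢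
    intro N
    exact (N : FQ φ).2.1.conj_mem n (hn N) t
  have hMfi : Msub.FiniteIndex :=
    Subgroup.finiteIndex_iInf (fun N => (N : FQ φ).2.2)
  obtain ⟨h, hh⟩ := exists_phi_eq φ ⟨Msub, hMnormal, hMfi⟩ g
  refine ⟨jmap φ (hnnBase φ (φ h)), ?_, ⟨h, rfl⟩⟩
  apply hsub
  intro N hN
  have hM : (hnnBase φ g)⁻¹ * hnnBase φ (φ h) ∈ Msub := by
    rw [QuotientGroup.mk'_apply, QuotientGroup.mk'_apply, QuotientGroup.eq] at hh
    exact hh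
  have hMN : Msub ≤ (N : FQ φ).1 := iInf_le (fun N : I => (N : FQ φ).1) ⟨N, hN⟩
  have : jmap φ (hnnBase φ (φ h)) N = jmap φ (hnnBase φ g) N := by
    change QuotientGroup.mk' _ (hnnBase φ (φ h)) = QuotientGroup.mk' _ (hnnBase φ g)
    rw [QuotientGroup.mk'_apply, QuotientGroup.mk'_apply]
    exact (QuotientGroup.eq.mpr (hMN hM)).symm
  rw [this]
  exact (hu N hN).2

end Profinite

section Conj

variable {G : Type} [Group G] (φ : G →* G)

lemma jconj (g : G) :
    jmap φ (hnnT φ) * jmap φ (hnnBase φ g) * (jmap φ (hnnT φ))⁻¹ =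
      jmap φ (hnnBase φ (φ g)) := by
  rw [← map_inv, ← map_mul, ← map_mul, hnn_conj]

lemma jconj' (g : G) :
    (jmap φ (hnnT φ))⁻¹ * jmap φ (hnnBase φ (φ g)) * jmap φ (hnnT φ) =
      jmap φ (hnnBase φ g) := by
  rw [← jconj]; group

end Conj

/-- If the ascending HNN extension of an injective endomorphism `φ` of a residually
finite group `G` is residually finite, then `φ` extends to a continuous automorphism
of a profinite group containing `G` as a dense subgroup. -/
theorem extendable_of_hnn_residuallyFinite {G : Type} [Group G]
    (hG : ResiduallyFinite G) (φ : G →* G) (hφ : Function.Injective φ)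
    (hrf : ResiduallyFinite (HNNExt φ)) :
    ∃ (Gbar : Type) (_ : Group Gbar) (_ : TopologicalSpace Gbar),
      ∃ (_ : IsTopologicalGroup Gbar) (_ : CompactSpace Gbar) (_ : T2Space Gbar)
        (_ : TotallyDisconnectedSpace Gbar) (ι : G →* Gbar),
      Function.Injective ι ∧ DenseRange ι ∧
        ∃ ψ : Gbar ≃* Gbar, Continuous ψ ∧ Continuous ψ.symm ∧
          ∀ g : G, ψ (ι g) = ι (φ g) := by
  classical
  set R : Subgroup (Cpf φ) := ((jmap φ).comp (hnnBaseHom φ)).range with hR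
  set K : Subgroup (Cpf φ) := R.topologicalClosure with hK
  set τ : Cpf φ := jmap φ (hnnT φ) with hτ
  have hRK : (R : Set (Cpf φ)) ⊆ (K : Set (Cpf φ)) := R.le_topologicalClosure
  have hKclosed : IsClosed (K : Set (Cpf φ)) := R.isClosed_topologicalClosure
  have hKeq : (K : Set (Cpf φ)) = closure (R : Set (Cpf φ)) := rfl
  -- forward conjugation stays in K
  have hfwd : ∀ c ∈ K, τ * c * τ⁻¹ ∈ K := by
    intro c hc
    have hcont : Continuous (fun x : Cpf φ => τ * x * τ⁻¹) :=
      (continuous_const.mul continuous_id).mul continuous_const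
    have himg : (fun x : Cpf φ => τ * x * τ⁻¹) '' (R : Set (Cpf φ)) ⊆ (K : Set (Cpf φ)) := by
      rintro _ ⟨_, ⟨g, rfl⟩, rfl⟩
      exact hRK (by
        simp only [MonoidHom.comp_apply, hnnBaseHom_apply]
        rw [jconj]
        exact ⟨φ g, rfl⟩)
    have h1 : (fun x : Cpf φ => τ * x * τ⁻¹) c ∈
        closure ((fun x : Cpf φ => τ * x * τ⁻¹) '' (R : Set (Cpf φ))) :=
      image_closure_subset_closure_image hcont ⟨c, hc, rfl⟩
    exact (closure_minimal himg hKclosed) h1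
  -- backward conjugation stays in K (uses density of φ(G))
  have hbwd : ∀ c ∈ K, τ⁻¹ * c * τ ∈ K := by
    have hcont : Continuous (fun x : Cpf φ => τ⁻¹ * x * τ) :=
      (continuous_const.mul continuous_id).mul continuous_const
    have himg : (fun x : Cpf φ => τ⁻¹ * x * τ) '' (R : Set (Cpf φ)) ⊆ (K : Set (Cpf φ)) := by
      rintro _ ⟨_, ⟨g, rfl⟩, rfl⟩
      simp only [MonoidHom.comp_apply, hnnBaseHom_apply]
      have hd := mem_closure_phi φ g
      have h2 : (fun x : Cpf φ => τ⁻¹ * x * τ) '' 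
          (Set.range (fun h : G => jmap φ (hnnBase φ (φ h)))) ⊆ (R : Set (Cpf φ)) := by
        rintro _ ⟨_, ⟨h, rfl⟩, rfl⟩
        simp only
        rw [hτ, jconj']
        exact ⟨h, rfl⟩
      have h3 : (fun x : Cpf φ => τ⁻¹ * x * τ) (jmap φ (hnnBase φ g)) ∈
          closure ((fun x : Cpf φ => τ⁻¹ * x * τ) ''
            (Set.range (fun h : G => jmap φ (hnnBase φ (φ h))))) :=
        image_closure_subset_closure_image hcont ⟨_, hd, rfl⟩
      exact (closure_mono h2) h3
    intro c hc
    have h1 : (fun x : Cpf φ => τ⁻¹ * x * τ) c ∈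
        closure ((fun x : Cpf φ => τ⁻¹ * x * τ) '' (R : Set (Cpf φ))) :=
      image_closure_subset_closure_image hcont ⟨c, hc, rfl⟩
    exact (closure_minimal himg hKclosed) h1
  haveI : CompactSpace K :=
    isCompact_iff_compactSpace.mp (hKclosed.isCompact)
  refine ⟨K, inferInstance, inferInstance, inferInstance, inferInstance, inferInstance,
    inferInstance, ((jmap φ).comp (hnnBaseHom φ)).codRestrict K (fun g => hRK ⟨g, rfl⟩),
    ?_, ?_, ?_⟩
  · -- injectivity
    rw [injective_iff_map_eq_one]
    intro g hg
    by_contra hg1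
    have hb : hnnBase φ g ≠ 1 := by
      intro h
      apply hg1
      apply hnnBase_injective φ hφ
      rw [h]
      exact (map_one (hnnBaseHom φ)).symm
    apply jmap_ne_one φ hrf hb
    exact congrArg Subtype.val hg
  · -- dense range
    intro x
    rw [closure_subtype]
    have : (Subtype.val : K → Cpf φ) ''
        (Set.range (((jmap φ).comp (hnnBaseHom φ)).codRestrict K (fun g => hRK ⟨g, rfl⟩)))
        = (R : Set (Cpf φ)) := by
      ext c
      constructor
      · rintro ⟨_, ⟨g, rfl⟩, rfl⟩; exact ⟨g, rfl⟩
      · rintro ⟨g, rfl⟩; exact ⟨_, ⟨g, rfl⟩, rfl⟩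
    rw [this]
    exact x.2
  · -- the automorphism
    refine ⟨{
      toFun := fun x => ⟨τ * x * τ⁻¹, hfwd x x.2⟩
      invFun := fun x => ⟨τ⁻¹ * x * τ, hbwd x x.2⟩
      left_inv := by intro x; ext; simp only; group
      right_inv := by intro x; ext; simp only; group
      map_mul' := by
        intro x y
        ext
        simp only [Subgroup.coe_mul]
        group }, ?_, ?_, ?_⟩
    · exact Continuous.subtype_mk
        ((continuous_const.mul continuous_subtype_val).mul continuous_const) _
    · exact Continuous.subtype_mk
        ((continuous_const.mul continuous_subtype_val).mul continuous_const) _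
    · intro g
      ext
      simp only [MulEquiv.coe_mk, Equiv.coe_fn_mk, MonoidHom.codRestrict_apply,
        MonoidHom.comp_apply, hnnBaseHom_apply]
      exact jconj φ g
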